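/- If a feature 𝓕 is not convex, then its steady generator σ^𝓕 is not balanced: there exist two filtrations F and G that are 1-interleaved but such that |S^𝓕_F(1 ≤ 5)| < |S^𝓕_G(0 ≤ 6)|, so σ^𝓕_F and σ^𝓕_G are not 1-compatible. -/

import Mathlib

open CategoryTheory

universe u v

/-- A feature on a finitely concrete mono category `(C, Φ)`: for each object `X`,
a collection of subsets of the underlying set `Φ.obj X`. -/
def Feature {C : Type u} [Category.{v} C] (Φ : C ⥤ Type v) :=
  ∀ X : C, Set (Set (Φ.obj X))

/-- The steady `𝓕`-sets of a filtration `F` at `(a ≤ b)`. -/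
def steadySet {C : Type u} [Category.{v} C] (Φ : C ⥤ Type v) (𝓕 : Feature Φ)
    (F : ℝ ⥤ C) (a b : ℝ) : Set (Set (Φ.obj (F.obj a))) :=
  {A | ∀ (w : ℝ) (h1 : a ≤ w), w ≤ b → Φ.map (F.map (homOfLE h1)) '' A ∈ 𝓕 (F.obj w)}

/-- The ranging `𝓕`-sets of a filtration `F` at `(a ≤ b)`. -/
def rangingSet {C : Type u} [Category.{v} C] (Φ : C ⥤ Type v) (𝓕 : Feature Φ)
    (F : ℝ ⥤ C) (a b : ℝ) : Set (Set (Φ.obj (F.obj a))) :=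
  {A | ∃ (x y : ℝ) (hx : x ≤ a) (_ : b ≤ y) (hy : a ≤ y) (A' : Set (Φ.obj (F.obj x))),
      A' ∈ 𝓕 (F.obj x) ∧ A = Φ.map (F.map (homOfLE hx)) '' A' ∧
      Φ.map (F.map (homOfLE hy)) '' A ∈ 𝓕 (F.obj y)}

/-- A feature is convex if `(A,X) ∈ 𝓕` and `ι'ι(A,X) ∈ 𝓕` imply `ι(A,X) ∈ 𝓕`. -/
def ConvexFeature {C : Type u} [Category.{v} C] (Φ : C ⥤ Type v) (𝓕 : Feature Φ) : Prop :=
  ∀ {X X' X'' : C} (ι : X ⟶ X') (ι' : X' ⟶ X'') (A : Set (Φ.obj X)),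
    A ∈ 𝓕 X → Φ.map (ι ≫ ι') '' A ∈ 𝓕 X'' → Φ.map ι '' A ∈ 𝓕 X'

/-- An `ε`-interleaving between two filtrations `F` and `G`. -/
structure Interleaving {C : Type u} [Category.{v} C] (F G : ℝ ⥤ C) (ε : ℝ) where
  hε : 0 ≤ ε
  φ : ∀ w : ℝ, F.obj w ⟶ G.obj (w + ε)
  ψ : ∀ w : ℝ, G.obj w ⟶ F.obj (w + ε)
  comm1 : ∀ w : ℝ, φ w ≫ ψ (w + ε) = F.map (homOfLE (by linarith : w ≤ w + ε + ε))
  comm2 : ∀ w : ℝ, ψ w ≫ φ (w + ε) = G.map (homOfLE (by linarith : w ≤ w + ε + ε))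
  nat1 : ∀ (a b : ℝ) (h : a ≤ b),
    F.map (homOfLE h) ≫ φ b = φ a ≫ G.map (homOfLE (by linarith : a + ε ≤ b + ε))
  nat2 : ∀ (a b : ℝ) (h : a ≤ b),
    G.map (homOfLE h) ≫ ψ b = ψ a ≫ F.map (homOfLE (by linarith : a + ε ≤ b + ε))

/-- The steady generator `σ^𝓕` is balanced: `ε`-interleaved filtrations have
`ε`-compatible steady persistence functions. -/
def SteadyBalanced {C : Type u} [Category.{v} C] (Φ : C ⥤ Type v) (𝓕 : Feature Φ) : Prop :=
  ∀ (F G : ℝ ⥤ C) (ε : ℝ), Nonempty (Interleaving F G ε) → ∀ (a b : ℝ), a ≤ b →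
    Nat.card (steadySet Φ 𝓕 F (a - ε) (b + ε)) ≤ Nat.card (steadySet Φ 𝓕 G a b) ∧
    Nat.card (steadySet Φ 𝓕 G (a - ε) (b + ε)) ≤ Nat.card (steadySet Φ 𝓕 F a b)

/-- The ranging generator `ρ^𝓕` is balanced. -/
def RangingBalanced {C : Type u} [Category.{v} C] (Φ : C ⥤ Type v) (𝓕 : Feature Φ) : Prop :=
  ∀ (F G : ℝ ⥤ C) (ε : ℝ), Nonempty (Interleaving F G ε) → ∀ (a b : ℝ), a ≤ b →
    Nat.card (rangingSet Φ 𝓕 F (a - ε) (b + ε)) ≤ Nat.card (rangingSet Φ 𝓕 G a b) ∧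
    Nat.card (rangingSet Φ 𝓕 G (a - ε) (b + ε)) ≤ Nat.card (rangingSet Φ 𝓕 F a b)

section StepAux
variable {C : Type u} [Category.{v} C] {X X' X'' : C}

instance psub {α : Type*} [Preorder α] (x y : α) : Subsingleton (x ⟶ y) :=
  ⟨fun ⟨⟨_⟩⟩ ⟨⟨_⟩⟩ => rfl⟩

def triObj (X X' X'' : C) : Fin 3 → C := ![X, X', X'']

def triMap (ι : X ⟶ X') (ι' : X' ⟶ X'') :
    ∀ (i j : Fin 3), i ≤ j → (triObj X X' X'' i ⟶ triObj X X' X'' j)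
  | ⟨0,_⟩, ⟨0,_⟩, _ => 𝟙 _
  | ⟨0,_⟩, ⟨1,_⟩, _ => ι
  | ⟨0,_⟩, ⟨2,_⟩, _ => ι ≫ ι'
  | ⟨1,_⟩, ⟨1,_⟩, _ => 𝟙 _
  | ⟨1,_⟩, ⟨2,_⟩, _ => ι'
  | ⟨2,_⟩, ⟨2,_⟩, _ => 𝟙 _
  | ⟨1,_⟩, ⟨0,_⟩, h => (Nat.not_succ_le_zero 0 h).elim
  | ⟨2,_⟩, ⟨0,_⟩, h => (Nat.not_succ_le_zero 1 h).elim
  | ⟨2,_⟩, ⟨1,_⟩, h => (Nat.not_succ_le_zero 0 (Nat.le_of_succ_le_succ h)).elim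

def triF (ι : X ⟶ X') (ι' : X' ⟶ X'') : Fin 3 ⥤ C where
  obj := triObj X X' X''
  map {i j} f := triMap ι ι' i j (leOfHom f)
  map_id i := by
    match i with
    | ⟨0,_⟩ => rfl
    | ⟨1,_⟩ => rfl
    | ⟨2,_⟩ => rfl
  map_comp {i j k} f g := by
    have hij := leOfHom f; have hjk := leOfHom g
    fin_cases i <;> fin_cases j <;> fin_cases k <;>
      first
        | exact absurd hij (by decide)
        | exact absurd hjk (by decide)
        | (simp [triMap] <;> first | rfl | exact (Category.id_comp (obj := C) _).symm | exact (Category.comp_id (obj := C) _).symm)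

lemma mapStep (T : Fin 3 ⥤ C) {i j i' j' : Fin 3} (f : i ⟶ j) (hi : i = i') (hj : j = j')
    (h : i' ≤ j') :
    T.map f = eqToHom (congrArg T.obj hi) ≫ T.map (homOfLE h) ≫ eqToHom (congrArg T.obj hj).symm := by
  subst hi; subst hj
  rw [Subsingleton.elim f (homOfLE h)]
  simp

noncomputable def sF : ℝ → Fin 3 := fun w => if w < 3 then 0 else if w < 5 then 1 else 2
noncomputable def sG : ℝ → Fin 3 := fun w => if w < 4 then 0 else 2

lemma sF_mono : Monotone sF := by
  intro a b hab; unfold sF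
  split_ifs <;> first | exact le_refl _ | decide | (exfalso; linarith)

lemma sG_mono : Monotone sG := by
  intro a b hab; unfold sG
  split_ifs <;> first | exact le_refl _ | decide | (exfalso; linarith)

lemma hφle : ∀ w : ℝ, sF w ≤ sG (w + 1) := by
  intro w; unfold sF sG
  split_ifs <;> first | decide | (exfalso; linarith)

lemma hψle : ∀ w : ℝ, sG w ≤ sF (w + 1) := by
  intro w; unfold sF sG
  split_ifs <;> first | decide | (exfalso; linarith)

lemma sF_1 : sF 1 = 0 := by norm_num [sF]
lemma sF_3 : sF 3 = 1 := by norm_num [sF]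
lemma sF_5 : sF 5 = 2 := by norm_num [sF]
lemma sG_0 : sG 0 = 0 := by norm_num [sG]
lemma sG_lt {w : ℝ} (h : w < 4) : sG w = 0 := by simp [sG, h]
lemma sG_ge {w : ℝ} (h : 4 ≤ w) : sG w = 2 := by simp [sG, not_lt.mpr h]

end StepAux

/-- if `𝓕` is not convex, then `σ^𝓕` is not balanced: there are
`1`-interleaved filtrations whose steady functions are not `1`-compatible. -/
theorem not_convex_implies_not_steadyBalanced {C : Type u} [Category.{v} C] (Φ : C ⥤ Type v)
    (hfin : ∀ X : C, Finite (Φ.obj X)) (hfaith : Φ.Faithful)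
    (hinj : ∀ {X Y : C} (f : X ⟶ Y), Function.Injective (Φ.map f))
    (hmono : ∀ {X Y : C} (f : X ⟶ Y), Mono f)
    (𝓕 : Feature Φ)
    (hiso : ∀ {X Y : C} (f : X ≅ Y) (A : Set (Φ.obj X)), A ∈ 𝓕 X ↔ Φ.map f.hom '' A ∈ 𝓕 Y)
    (hconv : ¬ ConvexFeature Φ 𝓕) :
    ∃ (F G : ℝ ⥤ C), Nonempty (Interleaving F G 1) ∧
      Nat.card (steadySet Φ 𝓕 F 1 5) < Nat.card (steadySet Φ 𝓕 G 0 6) := by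
  classical
  rw [ConvexFeature] at hconv
  simp only [not_forall] at hconv
  obtain ⟨X, X', X'', ι, ι', A, hA, hA2, hA1⟩ := hconv
  set T := triF ι ι' with hT
  refine ⟨sF_mono.functor ⋙ T, sG_mono.functor ⋙ T, ⟨?_⟩, ?_⟩
  · -- the interleaving
    refine ⟨zero_le_one, fun w => T.map (homOfLE (hφle w)), fun w => T.map (homOfLE (hψle w)),
      ?_, ?_, ?_, ?_⟩
    · intro w
      have hw : w ≤ w + 1 + 1 := by linarith
      show T.map (homOfLE (hφle w)) ≫ T.map (homOfLE (hψle (w + 1))) =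
        T.map (sF_mono.functor.map (homOfLE hw))
      rw [← T.map_comp]
      exact congrArg T.map (Subsingleton.elim _ _)
    · intro w
      have hw : w ≤ w + 1 + 1 := by linarith
      show T.map (homOfLE (hψle w)) ≫ T.map (homOfLE (hφle (w + 1))) =
        T.map (sG_mono.functor.map (homOfLE hw))
      rw [← T.map_comp]
      exact congrArg T.map (Subsingleton.elim _ _)
    · intro a b h
      have h' : a + 1 ≤ b + 1 := by linarith
      show T.map (sF_mono.functor.map (homOfLE h)) ≫ T.map (homOfLE (hφle b)) =
        T.map (homOfLE (hφle a)) ≫ T.map (sG_mono.functor.map (homOfLE h'))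
      rw [← T.map_comp]
      refine Eq.trans ?_ (T.map_comp _ _)
      exact congrArg T.map (Subsingleton.elim _ _)
    · intro a b h
      have h' : a + 1 ≤ b + 1 := by linarith
      show T.map (sG_mono.functor.map (homOfLE h)) ≫ T.map (homOfLE (hψle b)) =
        T.map (homOfLE (hψle a)) ≫ T.map (sF_mono.functor.map (homOfLE h'))
      rw [← T.map_comp]
      refine Eq.trans ?_ (T.map_comp _ _)
      exact congrArg T.map (Subsingleton.elim _ _)
  · -- the cardinality inequality
    set F := sF_mono.functor ⋙ T with hF
    set G := sG_mono.functor ⋙ T with hG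
    have ftrans : ∀ {Y Z : C} (h : Y = Z) (B : Set (Φ.obj Y)),
        B ∈ 𝓕 Y ↔ Φ.map (eqToHom h) '' B ∈ 𝓕 Z := by
      intro Y Z h B
      simpa using hiso (eqToIso h) B
    have himg : ∀ {Y Z W : C} (f : Y ⟶ Z) (g : Z ⟶ W) (B : Set (Φ.obj Y)),
        Φ.map g '' (Φ.map f '' B) = Φ.map (f ≫ g) '' B := by
      intro Y Z W f g B
      rw [Φ.map_comp, types_comp, Set.image_comp]
    have hF1 : F.obj (1:ℝ) = X := congrArg T.obj sF_1
    have hF3 : F.obj (3:ℝ) = X' := congrArg T.obj sF_3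
    have hF5 : F.obj (5:ℝ) = X'' := congrArg T.obj sF_5
    have hG0 : G.obj (0:ℝ) = X := congrArg T.obj sG_0
    have h13 : (1:ℝ) ≤ 3 := by norm_num
    have h15 : (1:ℝ) ≤ 5 := by norm_num
    have k11 : F.map (homOfLE (le_refl (1:ℝ))) = 𝟙 (F.obj (1:ℝ)) := by
      rw [Subsingleton.elim (homOfLE (le_refl (1:ℝ))) (𝟙 (1:ℝ))]
      exact F.map_id _
    have k13 : F.map (homOfLE h13) = eqToHom hF1 ≫ ι ≫ eqToHom hF3.symm :=
      mapStep T (sF_mono.functor.map (homOfLE h13)) sF_1 sF_3 (by decide)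
    have k15 : F.map (homOfLE h15) = eqToHom hF1 ≫ (ι ≫ ι') ≫ eqToHom hF5.symm :=
      mapStep T (sF_mono.functor.map (homOfLE h15)) sF_1 sF_5 (by decide)
    set SFs : Set (Set (Φ.obj X)) :=
      {B | B ∈ 𝓕 X ∧ Φ.map ι '' B ∈ 𝓕 X' ∧ Φ.map (ι ≫ ι') '' B ∈ 𝓕 X''} with hSFs
    set SGs : Set (Set (Φ.obj X)) :=
      {B | B ∈ 𝓕 X ∧ Φ.map (ι ≫ ι') '' B ∈ 𝓕 X''} with hSGs
    haveI : Finite (Φ.obj X) := hfin X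
    haveI : Finite (Φ.obj (G.obj (0:ℝ))) := hfin _
    -- map 1: steadySet F 1 5 → SFs
    have mem1 : ∀ B ∈ steadySet Φ 𝓕 F 1 5, Φ.map (eqToHom hF1) '' B ∈ SFs := by
      intro B hB
      have h1 := hB 1 le_rfl (by norm_num)
      have h3 := hB 3 h13 (by norm_num)
      have h5 := hB 5 h15 le_rfl
      rw [k11, Φ.map_id] at h1
      simp only [types_id, Set.image_id] at h1
      refine ⟨(ftrans hF1 _).mp h1, ?_, ?_⟩
      · have := (ftrans hF3 _).mp h3
        rw [himg, k13] at this
        have e : Φ.map ((eqToHom hF1 ≫ ι ≫ eqToHom hF3.symm) ≫ eqToHom hF3) '' B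
            = Φ.map ι '' (Φ.map (eqToHom hF1) '' B) := by
          rw [himg]
          congr 1
          simp
        rwa [e] at this
      · have := (ftrans hF5 _).mp h5
        rw [himg, k15] at this
        have e : Φ.map ((eqToHom hF1 ≫ (ι ≫ ι') ≫ eqToHom hF5.symm) ≫ eqToHom hF5) '' B
            = Φ.map (ι ≫ ι') '' (Φ.map (eqToHom hF1) '' B) := by
          rw [himg]
          congr 1
          simp
        rwa [e] at this
    have card1 : Nat.card (steadySet Φ 𝓕 F 1 5) ≤ Nat.card SFs := by
      refine Nat.card_le_card_of_injective
        (fun B => ⟨Φ.map (eqToHom hF1) '' B.1, mem1 B.1 B.2⟩) ?_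
      intro B B' h
      exact Subtype.ext (Set.image_injective.mpr (hinj _) (congrArg Subtype.val h))
    -- map 2: SGs → steadySet G 0 6
    have mem2 : ∀ B ∈ SGs, Φ.map (eqToHom hG0.symm) '' B ∈ steadySet Φ 𝓕 G 0 6 := by
      intro B hB w hw1 hw2
      rw [himg]
      by_cases hw : w < 4
      · have hGw : G.obj w = X := congrArg T.obj (sG_lt hw)
        have kw : G.map (homOfLE hw1) = eqToHom hG0 ≫ T.map (homOfLE (le_refl (0 : Fin 3)))
            ≫ eqToHom hGw.symm := mapStep T (sG_mono.functor.map (homOfLE hw1)) sG_0 (sG_lt hw) (le_refl 0)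
        have e : eqToHom hG0.symm ≫ G.map (homOfLE hw1) = eqToHom hGw.symm := by
          rw [kw]
          have : T.map (homOfLE (le_refl (0 : Fin 3))) = 𝟙 X := rfl
          rw [this]
          simp
          exact Category.id_comp _
        rw [e]
        exact (ftrans hGw.symm _).mp hB.1
      · have hGw : G.obj w = X'' := congrArg T.obj (sG_ge (not_lt.mp hw))
        have kw : G.map (homOfLE hw1) = eqToHom hG0 ≫ T.map (homOfLE (by decide : (0:Fin 3) ≤ 2))
            ≫ eqToHom hGw.symm := mapStep T (sG_mono.functor.map (homOfLE hw1)) sG_0 (sG_ge (not_lt.mp hw)) (by decide)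
        have e : eqToHom hG0.symm ≫ G.map (homOfLE hw1) = (ι ≫ ι') ≫ eqToHom hGw.symm := by
          rw [kw]
          have : T.map (homOfLE (by decide : (0:Fin 3) ≤ 2)) = ι ≫ ι' := rfl
          rw [this]
          simp
          exact Category.assoc _ _ _
        rw [e, ← himg]
        exact (ftrans hGw.symm _).mp hB.2
    have card2 : Nat.card SGs ≤ Nat.card (steadySet Φ 𝓕 G 0 6) := by
      refine Nat.card_le_card_of_injective
        (fun B => ⟨Φ.map (eqToHom hG0.symm) '' B.1, mem2 B.1 B.2⟩) ?_
      intro B B' h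
      exact Subtype.ext (Set.image_injective.mpr (hinj _) (congrArg Subtype.val h))
    have card3 : Nat.card SFs < Nat.card SGs := by
      have hssub : SFs ⊂ SGs := by
        constructor
        · intro B hB
          exact ⟨hB.1, hB.2.2⟩
        · intro hcon
          exact hA1 (hcon ⟨hA, hA2⟩).2.1
      rw [Nat.card_coe_set_eq, Nat.card_coe_set_eq]
      exact Set.ncard_lt_ncard hssub (Set.toFinite SGs)
    exact lt_of_le_of_lt card1 (lt_of_lt_of_le card3 card2)
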